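/- For every instance (X, Y, s, b) of Numerical Matching with Target Sums with |X| = |Y| = n ≥ 1, every maximum common connected induced subgraph isomorphism between the base gadgets B_G and B_H maps the vertex x̄ of B_G (the unique vertex of unbounded degree) to the vertex ȳ of B_H; that is, in any common connected induced subgraph isomorphism φ between B_G and B_H whose domain has |V(B_G)| − n + 1 vertices, x̄ is in the domain of φ and φ(x̄) = ȳ. -/
import Mathlib


namespace MCSPaper

/-- One directed step of the adjacency of a chain of triangle gadgets `K^v_w`.
Within gadget `j` (vertices: `(j,0) = v'`, `(j,1) = u`, `(j,2) = w`, where the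
attachment vertex `v` of gadget `j` is the pendant `w` of gadget `j-1`):
edges `v'-u`, `v'-w`, and the attachment edges `w_{j}-v'_{j+1}`, `w_j-u_{j+1}`. -/
def chainStep (j t j' t' : ℕ) : Prop :=
  (j' = j ∧ t = 0 ∧ (t' = 1 ∨ t' = 2)) ∨ (j' = j + 1 ∧ t = 2 ∧ (t' = 0 ∨ t' = 1))

/-- Vertices of the base gadgets `B_G`/`B_H` of the NMwTS reduction.
`g = false` selects the chordless `C`-gadgets, `g = true` the `D`-gadgets with chords.
For each `i` and `g` there is a cycle through the hub (`x̄` resp. `ȳ`) consisting of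
two arcs (`side = false/true`) of `S` internal vertices each, meeting at `far i g`
(the vertex `v'`), the anchor vertex `anchor i g` and the prime anchor `panchor i g`,
and `apmid j` are the middle vertices of the `n-1` anchor paths. -/
inductive BaseVert (n S : ℕ) : Type
  | hub
  | arc (i : Fin n) (g : Bool) (side : Bool) (p : Fin S)
  | far (i : Fin n) (g : Bool)
  | anchor (i : Fin n) (g : Bool)
  | panchor (i : Fin n) (g : Bool)
  | apmid (j : Fin (n - 1))
  deriving DecidableEq, Fintype

/-- Adjacency (one direction) of the base gadget; `gb` selects on which gadget type
(`true` = `D`-gadgets, as in `B_G`; `false` = `C`-gadgets, as in `B_H`) the anchor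
paths between consecutive prime anchor vertices are placed. -/
def baseRel (n S : ℕ) (gb : Bool) : BaseVert n S → BaseVert n S → Prop
  | .hub, .arc _ _ _ p => p.val = 0
  | .arc i g s p, .arc i' g' s' q =>
      i = i' ∧ g = g' ∧
        ((s = s' ∧ q.val = p.val + 1) ∨
          (g = true ∧ s ≠ s' ∧ ((p.val = 0 ∧ q.val = 0) ∨ (p.val + 1 = S ∧ q.val + 1 = S))))
  | .arc i g _ p, .far i' g' => i = i' ∧ g = g' ∧ p.val + 1 = S
  | .far i g, .panchor i' g' => i = i' ∧ g = g'
  | .panchor i g, .anchor i' g' => i = i' ∧ g = g'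
  | .panchor i g, .apmid j => g = gb ∧ (i.val = j.val ∨ i.val = j.val + 1)
  | _, _ => False

/-- The base gadget graph (`B_G` for `gb = true`, `B_H` for `gb = false`). -/
def baseGraph (n S : ℕ) (gb : Bool) : SimpleGraph (BaseVert n S) :=
  SimpleGraph.fromRel (baseRel n S gb)

/-- `Σ_s = ∑ i (s(x_i) + s(y_i))`. -/
def SigmaS (n : ℕ) (sx sy : Fin n → ℕ) : ℕ := ∑ i, (sx i + sy i)

/-- The vertices of the `xy`-paths of the graph `G`: for each `i`, an `x`-chain of
`s(x_i)` triangle gadgets, a `y`-chain of `s(y_i)` triangle gadgets and a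
separating path of `3` vertices. -/
inductive XYVert (n : ℕ) (sx sy : Fin n → ℕ) : Type
  | xv (i : Fin n) (j : Fin (sx i)) (t : Fin 3)
  | yv (i : Fin n) (j : Fin (sy i)) (t : Fin 3)
  | sep (i : Fin n) (t : Fin 3)
  deriving DecidableEq, Fintype

/-- Adjacency (one direction) of the graph `G` of the reduction: the base gadget `B_G`
together with, for each `i`, the `x`-chain attached at the anchor `c_i` of the `i`-th
`C`-gadget, the `y`-chain attached at the anchor `c_{i+n}` of the `i`-th `D`-gadget, and
the separating path joining the pendant ends of the two chains. -/
def graphGRel (n : ℕ) (sx sy : Fin n → ℕ) :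
    BaseVert n (SigmaS n sx sy) ⊕ XYVert n sx sy →
      BaseVert n (SigmaS n sx sy) ⊕ XYVert n sx sy → Prop
  | .inl a, .inl a' => baseRel n (SigmaS n sx sy) true a a'
  | .inl (.anchor i false), .inr (.xv i' j t) => i = i' ∧ j.val = 0 ∧ (t.val = 0 ∨ t.val = 1)
  | .inl (.anchor i true), .inr (.yv i' j t) => i = i' ∧ j.val = 0 ∧ (t.val = 0 ∨ t.val = 1)
  | .inr (.xv i j t), .inr (.xv i' j' t') => i = i' ∧ chainStep j.val t.val j'.val t'.val
  | .inr (.yv i j t), .inr (.yv i' j' t') => i = i' ∧ chainStep j.val t.val j'.val t'.val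
  | .inr (.xv i j t), .inr (.sep i' t') => i = i' ∧ j.val + 1 = sx i ∧ t.val = 2 ∧ t'.val = 0
  | .inr (.sep i t), .inr (.sep i' t') => i = i' ∧ t'.val = t.val + 1
  | .inr (.sep i t), .inr (.yv i' j t') => i = i' ∧ t.val = 2 ∧ j.val + 1 = sy i' ∧ t'.val = 2
  | _, _ => False

/-- The graph `G` of the NMwTS reduction. -/
def graphG (n : ℕ) (sx sy : Fin n → ℕ) :
    SimpleGraph (BaseVert n (SigmaS n sx sy) ⊕ XYVert n sx sy) :=
  SimpleGraph.fromRel (graphGRel n sx sy)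

/-- The vertices of the `b`-paths of the graph `H`: for each `i`, a chain of
`b_i + 1` triangle gadgets. -/
inductive BVert (n : ℕ) (b : Fin n → ℕ) : Type
  | bv (i : Fin n) (j : Fin (b i + 1)) (t : Fin 3)
  deriving DecidableEq, Fintype

/-- Adjacency (one direction) of the graph `H` of the reduction: the base gadget `B_H`
together with, for each `i`, the `b`-chain of `b_i + 1` triangle gadgets attached at the
anchor `c_i`, whose final pendant vertex is joined to the anchor `c_{i+n}`. -/
def graphHRel (n : ℕ) (sx sy b : Fin n → ℕ) :
    BaseVert n (SigmaS n sx sy) ⊕ BVert n b →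
      BaseVert n (SigmaS n sx sy) ⊕ BVert n b → Prop
  | .inl a, .inl a' => baseRel n (SigmaS n sx sy) false a a'
  | .inl (.anchor i false), .inr (.bv i' j t) => i = i' ∧ j.val = 0 ∧ (t.val = 0 ∨ t.val = 1)
  | .inr (.bv i j t), .inl (.anchor i' true) => i = i' ∧ j.val = b i ∧ t.val = 2
  | .inr (.bv i j t), .inr (.bv i' j' t') => i = i' ∧ chainStep j.val t.val j'.val t'.val
  | _, _ => False

/-- The graph `H` of the NMwTS reduction. -/
def graphH (n : ℕ) (sx sy b : Fin n → ℕ) :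
    SimpleGraph (BaseVert n (SigmaS n sx sy) ⊕ BVert n b) :=
  SimpleGraph.fromRel (graphHRel n sx sy b)

/-- A graph is biconnected if it has more than two vertices and deleting any single
vertex leaves it connected. -/
def Biconnected {V : Type*} [Fintype V] (G : SimpleGraph V) : Prop :=
  2 < Fintype.card V ∧ ∀ v : V, (G.induce {u | u ≠ v}).Connected

/-- `R`, `S` carry a common connected induced subgraph of `G` and `H`:
`G[R]` is connected and isomorphic to `H[S]`. -/
def IsCCIS {α β : Type*} (G : SimpleGraph α) (H : SimpleGraph β)
    (R : Set α) (S : Set β) : Prop :=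
  (G.induce R).Connected ∧ Nonempty (G.induce R ≃g H.induce S)



open SimpleGraph

private lemma nbr_le {V : Type*} [Fintype V] {G : SimpleGraph V} {v : V}
    {s : Set V} (h : G.neighborSet v ⊆ s) {k : ℕ} (hs : s.ncard ≤ k) :
    (G.neighborSet v).ncard ≤ k :=
  le_trans (Set.ncard_le_ncard h (Set.toFinite s)) hs

private lemma ncard_range_le {α β : Type*} [Fintype α] {f : α → β}
    (hf : Function.Injective f) : (Set.range f).ncard = Fintype.card α := by
  rw [← Nat.card_coe_set_eq, Nat.card_range_of_injective hf, Nat.card_eq_fintype_card]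

private lemma ncard_triple_le {β : Type*} (a b c : β) : ({a, b, c} : Set β).ncard ≤ 3 := by
  have h1 := Set.ncard_insert_le a ({b, c} : Set β)
  have h2 := Set.ncard_insert_le b ({c} : Set β)
  have h3 := Set.ncard_singleton c
  omega

private lemma nbrH_bound {n S : ℕ} (hn : 1 ≤ n) (hS : 2 ≤ S) (v : BaseVert n S)
    (hv : v ≠ .hub) : ((baseGraph n S false).neighborSet v).ncard ≤ 3 * n := by
  have hins : ∀ (a b c : BaseVert n S), ({a, b, c} : Set _).ncard ≤ 3 * n :=
    fun a b c => le_trans (ncard_triple_le a b c) (by omega)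
  cases v with
  | hub => exact absurd rfl hv
  | arc i g s p =>
    by_cases hp0 : p.val = 0
    · refine nbr_le (s := {BaseVert.hub, .arc i g s ⟨1, by omega⟩, .arc i g (!s) p}) ?_ (hins _ _ _)
      intro u hu
      rw [mem_neighborSet, baseGraph, fromRel_adj] at hu
      obtain ⟨hne, h | h⟩ := hu
      · cases u with
        | arc i' g' s' q =>
          obtain ⟨rfl, rfl, ⟨rfl, hq⟩ | ⟨hg, hs', hc⟩⟩ := h
          · right; left; congr 1; exact Fin.ext (show q.val = 1 by omega)
          · rcases hc with ⟨hq1, hq2⟩ | ⟨hq1, hq2⟩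
            · have : s' = !s := by cases s <;> cases s' <;> simp_all
              subst this
              right; right; congr 1; exact Fin.ext (by omega)
            · omega
        | far i' g' => obtain ⟨_, _, hq⟩ := h; omega
        | _ => exact h.elim
      · cases u with
        | hub => left; rfl
        | arc i' g' s' q =>
          obtain ⟨rfl, rfl, ⟨rfl, hq⟩ | ⟨hg, hs', hc⟩⟩ := h
          · omega
          · rcases hc with ⟨hq1, hq2⟩ | ⟨hq1, hq2⟩
            · have : s' = !s := by cases s <;> cases s' <;> simp_all
              subst this
              right; right; congr 1; exact Fin.ext (by omega)
            · have := q.isLt; omega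
        | _ => exact h.elim
    · by_cases hpS : p.val + 1 = S
      · refine nbr_le
          (s := {BaseVert.arc i g s ⟨p.val - 1, by omega⟩, .far i g, .arc i g (!s) p})
          ?_ (hins _ _ _)
        intro u hu
        rw [mem_neighborSet, baseGraph, fromRel_adj] at hu
        obtain ⟨hne, h | h⟩ := hu
        · cases u with
          | arc i' g' s' q =>
            obtain ⟨rfl, rfl, ⟨rfl, hq⟩ | ⟨hg, hs', hc⟩⟩ := h
            · have := q.isLt; omega
            · rcases hc with ⟨hq1, hq2⟩ | ⟨hq1, hq2⟩
              · omega
              · have : s' = !s := by cases s <;> cases s' <;> simp_all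
                subst this
                right; right; congr 1; exact Fin.ext (by omega)
          | far i' g' => obtain ⟨rfl, rfl, _⟩ := h; right; left; rfl
          | _ => exact h.elim
        · cases u with
          | hub => simp only [baseRel] at h; omega
          | arc i' g' s' q =>
            obtain ⟨rfl, rfl, ⟨rfl, hq⟩ | ⟨hg, hs', hc⟩⟩ := h
            · left; congr 1; exact Fin.ext (show q.val = p.val - 1 by omega)
            · rcases hc with ⟨hq1, hq2⟩ | ⟨hq1, hq2⟩
              · omega
              · have : s' = !s := by cases s <;> cases s' <;> simp_all
                subst this
                right; right; congr 1; exact Fin.ext (by omega)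
          | _ => exact h.elim
      · refine nbr_le
          (s := {BaseVert.arc i g s ⟨p.val - 1, by omega⟩, .arc i g s ⟨p.val + 1, by omega⟩,
                 .arc i g s p}) ?_ (hins _ _ _)
        intro u hu
        rw [mem_neighborSet, baseGraph, fromRel_adj] at hu
        obtain ⟨hne, h | h⟩ := hu
        · cases u with
          | arc i' g' s' q =>
            obtain ⟨rfl, rfl, ⟨rfl, hq⟩ | ⟨hg, hs', hc⟩⟩ := h
            · right; left; congr 1; exact Fin.ext (show q.val = p.val + 1 by omega)
            · rcases hc with ⟨hq1, hq2⟩ | ⟨hq1, hq2⟩ <;> omega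
          | far i' g' => obtain ⟨_, _, hq⟩ := h; omega
          | _ => exact h.elim
        · cases u with
          | hub => simp only [baseRel] at h; omega
          | arc i' g' s' q =>
            obtain ⟨rfl, rfl, ⟨rfl, hq⟩ | ⟨hg, hs', hc⟩⟩ := h
            · left; congr 1; exact Fin.ext (show q.val = p.val - 1 by omega)
            · rcases hc with ⟨hq1, hq2⟩ | ⟨hq1, hq2⟩ <;> omega
          | _ => exact h.elim
  | far i g =>
    refine nbr_le
      (s := {BaseVert.arc i g false ⟨S - 1, by omega⟩, .arc i g true ⟨S - 1, by omega⟩,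
             .panchor i g}) ?_ (hins _ _ _)
    intro u hu
    rw [mem_neighborSet, baseGraph, fromRel_adj] at hu
    obtain ⟨hne, h | h⟩ := hu
    · cases u with
      | panchor i' g' => obtain ⟨rfl, rfl⟩ := h; right; right; rfl
      | _ => exact h.elim
    · cases u with
      | arc i' g' s' q =>
        obtain ⟨rfl, rfl, hq⟩ := h
        cases s' with
        | false => left; congr 1; exact Fin.ext (show q.val = S - 1 by omega)
        | true => right; left; congr 1; exact Fin.ext (show q.val = S - 1 by omega)
      | _ => exact h.elim
  | anchor i g =>
    refine nbr_le (s := {BaseVert.panchor i g, .panchor i g, .panchor i g}) ?_ (hins _ _ _)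
    intro u hu
    rw [mem_neighborSet, baseGraph, fromRel_adj] at hu
    obtain ⟨hne, h | h⟩ := hu
    · cases u <;> exact h.elim
    · cases u with
      | panchor i' g' => obtain ⟨rfl, rfl⟩ := h; left; rfl
      | _ => exact h.elim
  | panchor i g =>
    refine nbr_le
      (s := ({BaseVert.anchor i g, .far i g} : Set _) ∪
            Set.range (BaseVert.apmid (n := n) (S := S))) ?_ ?_
    · intro u hu
      rw [mem_neighborSet, baseGraph, fromRel_adj] at hu
      obtain ⟨hne, h | h⟩ := hu
      · cases u with
        | anchor i' g' => obtain ⟨rfl, rfl⟩ := h; left; left; rfl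
        | apmid j => exact Or.inr ⟨j, rfl⟩
        | _ => exact h.elim
      · cases u with
        | far i' g' => obtain ⟨rfl, rfl⟩ := h; left; right; rfl
        | _ => exact h.elim
    · refine le_trans (Set.ncard_union_le _ _) ?_
      have h1 := Set.ncard_insert_le (BaseVert.anchor (S := S) i g) ({.far i g} : Set _)
      have h2 := Set.ncard_singleton (BaseVert.far (S := S) i g)
      have h3 : (Set.range (BaseVert.apmid (n := n) (S := S))).ncard = n - 1 := by
        rw [ncard_range_le (fun a b h => by simpa using h)]; simp
      omega
  | apmid j =>
    refine nbr_le
      (s := Set.range (fun i : Fin n => BaseVert.panchor (S := S) i false)) ?_ ?_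
    · intro u hu
      rw [mem_neighborSet, baseGraph, fromRel_adj] at hu
      obtain ⟨hne, h | h⟩ := hu
      · cases u <;> exact h.elim
      · cases u with
        | panchor i' g' =>
          obtain ⟨rfl, _⟩ := h
          exact ⟨i', rfl⟩
        | _ => exact h.elim
    · rw [ncard_range_le (fun a b h => by simpa using h)]
      simp; omega

end MCSPaper

namespace MCSPaper
open SimpleGraph

private lemma walk_const {V : Type*} {G : SimpleGraph V} (f : V → ℕ)
    (h : ∀ u v : V, G.Adj u v → f u = f v) {u v : V} (w : G.Walk u v) : f u = f v := by
  induction w with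
  | nil => rfl
  | cons h' _ ih => exact (h _ _ h').trans ih

private def label {n S : ℕ} : BaseVert n S → ℕ
  | .hub => 0
  | .arc i g _ _ => if g then 0 else i.val + 1
  | .far i g => if g then 0 else i.val + 1
  | .anchor i g => if g then 0 else i.val + 1
  | .panchor i g => if g then 0 else i.val + 1
  | .apmid _ => 0

private lemma label_pres {n S : ℕ} {u v : BaseVert n S}
    (h : baseRel n S true u v) (hu : u ≠ .hub) : label u = label v := by
  cases u <;> cases v <;>
    first
      | exact h.elim
      | exact absurd rfl hu
      | (simp only [baseRel] at h; simp_all [label])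

private lemma hub_mem {n S : ℕ} (hn : 1 ≤ n) (hSn : n ≤ S) {R : Set (BaseVert n S)}
    (hconn : ((baseGraph n S true).induce R).Connected)
    (hRc : Rᶜ.ncard ≤ n - 1) : BaseVert.hub ∈ R := by
  by_contra hhub
  have i0 : Fin n := ⟨0, hn⟩
  have exmem : ∀ g : Bool, ∃ p : Fin S, BaseVert.arc i0 g false p ∈ R := by
    intro g
    by_contra hno
    push_neg at hno
    have hsub : Set.range (fun p : Fin S => BaseVert.arc i0 g false p) ⊆ Rᶜ := by
      rintro _ ⟨p, rfl⟩; exact hno p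
    have := Set.ncard_le_ncard hsub (Set.toFinite _)
    rw [ncard_range_le (fun a b h => by simpa using h)] at this
    simp only [Fintype.card_fin] at this
    omega
  obtain ⟨p, hp⟩ := exmem false
  obtain ⟨q, hq⟩ := exmem true
  obtain ⟨wk⟩ := hconn.preconnected ⟨_, hp⟩ ⟨_, hq⟩
  have hcst := walk_const (G := (baseGraph n S true).induce R)
    (fun a => label a.val) ?_ wk
  · simp only [label, if_true, if_false] at hcst
    exact absurd hcst (by simp)
  · rintro ⟨a, ha⟩ ⟨b, hb⟩ hadj
    have hadj' : (baseGraph n S true).Adj a b := hadj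
    rw [baseGraph, fromRel_adj] at hadj'
    obtain ⟨hne, h | h⟩ := hadj'.imp_right id
    · exact label_pres h (fun hh => hhub (hh ▸ ha))
    · exact (label_pres h (fun hh => hhub (hh ▸ hb))).symm

end MCSPaper

namespace MCSPaper
open SimpleGraph

/-- For every instance of Numerical Matching with Target Sums
(`n ≥ 1`, positive values `sx i`, `sy i` and positive targets `b i`), every maximum
common connected induced subgraph isomorphism between the base gadgets `B_G` and `B_H`
(i.e., every isomorphism `φ : B_G[R] ≃g B_H[S]` with `B_G[R]` connected and
`|R| = |V(B_G)| - n + 1`) maps the vertex `x̄` of `B_G` (the hub, the unique vertex of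
unbounded degree) to the vertex `ȳ` of `B_H` (the hub). -/
theorem maximum_iso_maps_hub_to_hub (n : ℕ) (hn : 1 ≤ n) (sx sy b : Fin n → ℕ)
    (hsx : ∀ i, 1 ≤ sx i) (hsy : ∀ i, 1 ≤ sy i) (hb : ∀ i, 1 ≤ b i)
    (R S : Set (BaseVert n (SigmaS n sx sy)))
    (φ : (baseGraph n (SigmaS n sx sy) true).induce R ≃g
          (baseGraph n (SigmaS n sx sy) false).induce S)
    (hconn : ((baseGraph n (SigmaS n sx sy) true).induce R).Connected)
    (hmax : R.ncard = Fintype.card (BaseVert n (SigmaS n sx sy)) - n + 1) :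
    ∃ h : (BaseVert.hub : BaseVert n (SigmaS n sx sy)) ∈ R,
      (φ ⟨BaseVert.hub, h⟩).val = BaseVert.hub := by
  have hS2n : 2 * n ≤ SigmaS n sx sy := by
    rw [SigmaS]
    calc 2 * n = ∑ _i : Fin n, 2 := by simp [mul_comm]
      _ ≤ ∑ i, (sx i + sy i) :=
        Finset.sum_le_sum fun i _ => by have := hsx i; have := hsy i; omega
  have hcard_n : n ≤ Fintype.card (BaseVert n (SigmaS n sx sy)) := by
    have := Fintype.card_le_of_injective
      (fun i : Fin n => BaseVert.anchor (S := SigmaS n sx sy) i true)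
      (fun a b h => by simpa using h)
    simpa using this
  have hRc : Rᶜ.ncard ≤ n - 1 := by
    have h := Set.ncard_add_ncard_compl R
    rw [Nat.card_eq_fintype_card] at h
    omega
  have hhubR : BaseVert.hub ∈ R := hub_mem hn (by omega) hconn hRc
  have hT0 : (0 : ℕ) < SigmaS n sx sy := by omega
  have hTcard : (Set.range (fun x : Fin n × Bool × Bool =>
      BaseVert.arc x.1 x.2.1 x.2.2 ⟨0, hT0⟩)).ncard = 4 * n := by
    rw [ncard_range_le (fun a b h => by
      rcases a with ⟨a1, a2, a3⟩; rcases b with ⟨b1, b2, b3⟩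
      simp only [BaseVert.arc.injEq] at h
      obtain ⟨rfl, rfl, rfl, -⟩ := h; rfl)]
    simp only [Fintype.card_prod, Fintype.card_fin, Fintype.card_bool]
    ring
  have hTR : 3 * n + 1 ≤ ((Set.range (fun x : Fin n × Bool × Bool =>
      BaseVert.arc x.1 x.2.1 x.2.2 ⟨0, hT0⟩)) ∩ R).ncard := by
    have hsub : (Set.range (fun x : Fin n × Bool × Bool =>
        BaseVert.arc x.1 x.2.1 x.2.2 ⟨0, hT0⟩)) ⊆
        ((Set.range (fun x : Fin n × Bool × Bool =>
          BaseVert.arc x.1 x.2.1 x.2.2 ⟨0, hT0⟩)) ∩ R) ∪ Rᶜ := by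
      intro u hu
      by_cases h : u ∈ R
      · exact Or.inl ⟨hu, h⟩
      · exact Or.inr h
    have := le_trans (Set.ncard_le_ncard hsub (Set.toFinite _)) (Set.ncard_union_le _ _)
    omega
  have hinj : 3 * n + 1 ≤ Nat.card
      (((baseGraph n (SigmaS n sx sy) true).induce R).neighborSet
        ⟨BaseVert.hub, hhubR⟩) := by
    have finj : Function.Injective (fun u : ((Set.range (fun x : Fin n × Bool × Bool =>
        BaseVert.arc x.1 x.2.1 x.2.2 ⟨0, hT0⟩)) ∩ R : Set _) =>
        (⟨⟨u.val, u.2.2⟩, by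
          obtain ⟨x, hx⟩ := u.2.1
          have : (baseGraph n (SigmaS n sx sy) true).Adj BaseVert.hub u.val := by
            rw [baseGraph, fromRel_adj]
            refine ⟨by rw [← hx]; simp, Or.inl ?_⟩
            rw [← hx]
            show (⟨0, hT0⟩ : Fin (SigmaS n sx sy)).val = 0
            rfl
          exact this⟩ :
          ((baseGraph n (SigmaS n sx sy) true).induce R).neighborSet
            ⟨BaseVert.hub, hhubR⟩)) := by
      intro a b h
      exact Subtype.ext (by simpa using congrArg (fun z => z.val.val) h)
    have h2 := Nat.card_le_card_of_injective _ finj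
    rw [Nat.card_coe_set_eq] at h2
    exact le_trans hTR h2
  have hNw : Nat.card (((baseGraph n (SigmaS n sx sy) true).induce R).neighborSet
        ⟨BaseVert.hub, hhubR⟩) =
      Nat.card (((baseGraph n (SigmaS n sx sy) false).induce S).neighborSet
        (φ ⟨BaseVert.hub, hhubR⟩)) :=
    Nat.card_congr (φ.mapNeighborSet _)
  have hup : Nat.card (((baseGraph n (SigmaS n sx sy) false).induce S).neighborSet
        (φ ⟨BaseVert.hub, hhubR⟩)) ≤
      Nat.card ((baseGraph n (SigmaS n sx sy) false).neighborSet
        (φ ⟨BaseVert.hub, hhubR⟩).val) := by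
    refine Nat.card_le_card_of_injective
      (fun u => (⟨u.val.val, u.2⟩ :
        ((baseGraph n (SigmaS n sx sy) false).neighborSet
          (φ ⟨BaseVert.hub, hhubR⟩).val))) ?_
    intro a b h
    exact Subtype.ext (Subtype.ext (by simpa using congrArg Subtype.val h))
  by_cases hwh : (φ ⟨BaseVert.hub, hhubR⟩).val = BaseVert.hub
  · exact ⟨hhubR, hwh⟩
  · exfalso
    have hbound := nbrH_bound hn (by omega) (φ ⟨BaseVert.hub, hhubR⟩).val hwh
    rw [← Nat.card_coe_set_eq] at hbound
    omega

end MCSPaper
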